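/- A permutation π of {1,...,n} is valleyless if and only if its inversion table (a_1,...,a_n) satisfies: for each k, a_k = 0 or a_k = n - k, where a_k is the number of symbols to the left of k in the word π_1...π_n that are greater than k. -/
import Mathlib


/-- A permutation word `π 0, …, π (n-1)` is valleyless if no entry is strictly below
some earlier entry and some later entry. -/
def PermValleyless {n : ℕ} (π : Equiv.Perm (Fin n)) : Prop :=
  ∀ i j k : Fin n, i < j → j < k → min (π i) (π k) ≤ π j

/-- Inversion table entry for the symbol `k` (0-indexed; symbol `k` stands for `k+1`):
the number of positions to the left of `k` in the word holding a symbol greater than `k`. -/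
def invTable {n : ℕ} (π : Equiv.Perm (Fin n)) (k : Fin n) : ℕ :=
  (Finset.univ.filter (fun i : Fin n => i < π.symm k ∧ k < π i)).card

/-- A permutation is valleyless iff each inversion table entry `a_k` is `0` or `n - k`
(in 0-indexed form, `n - 1 - k`). -/
lemma card_gt {n : ℕ} (π : Equiv.Perm (Fin n)) (k : Fin n) :
    (Finset.univ.filter (fun i : Fin n => k < π i)).card = n - 1 - k.val := by
  have : (Finset.univ.filter (fun i : Fin n => k < π i)).card
      = (Finset.Ioi k).card := by
    apply Finset.card_bij (fun i _ => π i)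
    · intro a ha; simp_all [Finset.mem_Ioi]
    · intro a _ b _ h; exact π.injective h
    · intro b hb; exact ⟨π.symm b, by simp_all [Finset.mem_Ioi], by simp⟩
  rw [this, Fin.card_Ioi]


theorem valleyless_iff_invTable {n : ℕ} (π : Equiv.Perm (Fin n)) :
    PermValleyless π ↔ ∀ k : Fin n, invTable π k = 0 ∨ invTable π k = n - 1 - k.val := by
  constructor
  · intro h k
    by_contra hc
    push_neg at hc
    obtain ⟨h0, hn⟩ := hc
    set S := Finset.univ.filter (fun i : Fin n => i < π.symm k ∧ k < π i) with hS
    set T := Finset.univ.filter (fun i : Fin n => k < π i) with hT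
    have hST : S ⊆ T := by
      intro x hx; simp only [hS, hT, Finset.mem_filter] at *; exact ⟨hx.1, hx.2.2⟩
    have hne : S ≠ T := by
      intro he
      exact hn (by rw [invTable, ← hS, he, hT, card_gt])
    obtain ⟨p, hpT, hpS⟩ := Finset.exists_of_ssubset (hST.ssubset_of_ne hne)
    simp only [hS, hT, Finset.mem_filter, Finset.mem_univ, true_and, not_and] at hpT hpS
    have hp2 : ¬ p < π.symm k := fun hlt => hpS hlt hpT
    have hp3 : π.symm k < p := by
      rcases lt_or_eq_of_le (le_of_not_gt hp2) with h' | h'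
      · exact h'
      · exfalso; rw [← h'] at hpT; simp at hpT
    have hSne : S.Nonempty := Finset.nonempty_iff_ne_empty.2 (by
      intro he; exact h0 (by rw [invTable, ← hS, he, Finset.card_empty]))
    obtain ⟨i, hi⟩ := hSne
    simp only [hS, Finset.mem_filter, Finset.mem_univ, true_and] at hi
    have := h i (π.symm k) p hi.1 hp3
    rw [Equiv.apply_symm_apply] at this
    exact absurd (lt_of_lt_of_le (lt_min hi.2 hpT) this) (lt_irrefl k)
  · intro h
    intro i j k hij hjk
    by_contra hc
    push_neg at hc
    set v := π j with hv
    have hjv : π.symm v = j := π.symm_apply_apply j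
    have hiv : v < π i := lt_of_lt_of_le hc (min_le_left _ _)
    have hkv : v < π k := lt_of_lt_of_le hc (min_le_right _ _)
    set S := Finset.univ.filter (fun x : Fin n => x < π.symm v ∧ v < π x) with hS
    set T := Finset.univ.filter (fun x : Fin n => v < π x) with hT
    have hiS : i ∈ S := by
      simp only [hS, Finset.mem_filter, Finset.mem_univ, true_and]
      exact ⟨hjv ▸ hij, hiv⟩
    have hkT : k ∈ T := by simp [hT, hkv]
    have hkS : k ∉ S := by
      simp only [hS, Finset.mem_filter, Finset.mem_univ, true_and, not_and]
      intro hk; exact absurd (hjv ▸ hk) (not_lt.2 hjk.le)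
    rcases h v with h1 | h1
    · rw [invTable, ← hS, Finset.card_eq_zero] at h1
      rw [h1] at hiS; simp at hiS
    · rw [invTable, ← hS] at h1
      have hsub : S ⊆ T.erase k := by
        intro x hx
        simp only [hS, hT, Finset.mem_filter, Finset.mem_univ, true_and] at hx ⊢
        rw [Finset.mem_erase]
        refine ⟨fun he => hkS ?_, by simp [hT, hx.2]⟩
        · subst he; simp only [hS, Finset.mem_filter, Finset.mem_univ, true_and]; exact hx
      have h2 := Finset.card_le_card hsub
      rw [Finset.card_erase_of_mem hkT] at h2
      have h3 : T.card = n - 1 - v.val := by rw [hT, card_gt]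
      have h4 : 0 < T.card := Finset.card_pos.2 ⟨k, hkT⟩
      omega
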